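/- Let n ∈ ℕ, let A and B be diagonalizable n×n complex matrices with real eigenvalues: A = U^{-1} diag(λ₁,…,λₙ) U and B = V^{-1} diag(μ₁,…,μₙ) V for invertible U, V, and let |A| = U^{-1} diag(|λ₁|,…,|λₙ|) U, |B| = V^{-1} diag(|μ₁|,…,|μₙ|) V. Viewing matrices as operators from ℓ_1^n to ℓ_1^n, there exists a constant C independent of n, A, B such that ‖|B| − |A|‖_{L(ℓ_1^n)} ≤ C ‖U‖‖U^{-1}‖‖V‖‖V^{-1}‖ ‖B − A‖_{L(ℓ_1^n)}. -/
import Mathlib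


open scoped ENNReal

/-- The operator norm of an `n×n` matrix viewed as an operator from `ℓ_1^n` to `ℓ_1^n`. -/
noncomputable def l1OpNorm {n : ℕ} (A : Matrix (Fin n) (Fin n) ℂ) : ℝ :=
  ‖LinearMap.toContinuousLinearMap
    (((WithLp.linearEquiv 1 ℂ (∀ _ : Fin n, ℂ)).symm.toLinearMap.comp
      A.mulVecLin).comp
      (WithLp.linearEquiv 1 ℂ (∀ _ : Fin n, ℂ)).toLinearMap)‖


noncomputable def toL1CLM {n : ℕ} (A : Matrix (Fin n) (Fin n) ℂ) :
    WithLp 1 (∀ _ : Fin n, ℂ) →L[ℂ] WithLp 1 (∀ _ : Fin n, ℂ) :=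
  LinearMap.toContinuousLinearMap
    (((WithLp.linearEquiv 1 ℂ (∀ _ : Fin n, ℂ)).symm.toLinearMap.comp
      A.mulVecLin).comp
      (WithLp.linearEquiv 1 ℂ (∀ _ : Fin n, ℂ)).toLinearMap)

noncomputable def l1OpNorm' {n : ℕ} (A : Matrix (Fin n) (Fin n) ℂ) : ℝ := ‖toL1CLM A‖

lemma l1_norm_eq {n : ℕ} (y : WithLp 1 (∀ _ : Fin n, ℂ)) : ‖y‖ = ∑ i, ‖y i‖ := by
  rw [PiLp.norm_eq_sum (by norm_num)]
  simp

lemma toL1CLM_mul {n : ℕ} (A B : Matrix (Fin n) (Fin n) ℂ) :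
    toL1CLM (A * B) = (toL1CLM A).comp (toL1CLM B) := by
  ext x i
  show (A * B).mulVec ((WithLp.equiv 1 _) x) i = A.mulVec (B.mulVec ((WithLp.equiv 1 _) x)) i
  rw [← Matrix.mulVec_mulVec]

lemma l1OpNorm'_mul_le {n : ℕ} (A B : Matrix (Fin n) (Fin n) ℂ) :
    l1OpNorm' (A * B) ≤ l1OpNorm' A * l1OpNorm' B := by
  rw [l1OpNorm', toL1CLM_mul]
  exact ContinuousLinearMap.opNorm_comp_le _ _

lemma colsum_le {n : ℕ} (N : Matrix (Fin n) (Fin n) ℂ) (k : Fin n) :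
    ∑ j, ‖N j k‖ ≤ l1OpNorm' N := by
  have h := (toL1CLM N).le_opNorm ((WithLp.equiv 1 (∀ _ : Fin n, ℂ)).symm (Pi.single k 1))
  have h1 : ‖(WithLp.equiv 1 (∀ _ : Fin n, ℂ)).symm (Pi.single k 1)‖ = 1 := by
    rw [l1_norm_eq]
    have e : ∀ j, ‖((WithLp.equiv 1 (∀ _ : Fin n, ℂ)).symm (Pi.single k 1) :
        WithLp 1 (∀ _ : Fin n, ℂ)) j‖ = if j = k then 1 else 0 := fun j => by
      show ‖(Pi.single k 1 : Fin n → ℂ) j‖ = _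
      rw [Pi.single_apply]
      split <;> simp
    calc ∑ j, ‖((WithLp.equiv 1 (∀ _ : Fin n, ℂ)).symm (Pi.single k 1) :
          WithLp 1 (∀ _ : Fin n, ℂ)) j‖ = ∑ j, if j = k then (1:ℝ) else 0 :=
        Finset.sum_congr rfl fun j _ => e j
      _ = 1 := by simp
  have h2 : ‖toL1CLM N ((WithLp.equiv 1 (∀ _ : Fin n, ℂ)).symm (Pi.single k 1))‖
      = ∑ j, ‖N j k‖ := by
    rw [l1_norm_eq]
    congr 1
    ext j
    show ‖N.mulVec (Pi.single k 1) j‖ = _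
    simp [Matrix.mulVec_single]
  rw [h1, mul_one, h2] at h
  exact h

lemma l1OpNorm'_mono {n : ℕ} (M N : Matrix (Fin n) (Fin n) ℂ)
    (h : ∀ j k, ‖M j k‖ ≤ ‖N j k‖) : l1OpNorm' M ≤ l1OpNorm' N := by
  refine ContinuousLinearMap.opNorm_le_bound _ (ContinuousLinearMap.opNorm_nonneg _) fun x => ?_
  rw [l1_norm_eq]
  calc ∑ j, ‖toL1CLM M x j‖ ≤ ∑ j, ∑ k, ‖M j k‖ * ‖x k‖ := by
        refine Finset.sum_le_sum fun j _ => ?_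
        show ‖∑ k, M j k * (WithLp.equiv 1 _ x) k‖ ≤ _
        refine (norm_sum_le _ _).trans (Finset.sum_le_sum fun k _ => ?_)
        rw [norm_mul]
        exact le_rfl
    _ = ∑ k, (∑ j, ‖M j k‖) * ‖x k‖ := by
        rw [Finset.sum_comm]
        simp [Finset.sum_mul]
    _ ≤ ∑ k, l1OpNorm' N * ‖x k‖ := by
        refine Finset.sum_le_sum fun k _ => ?_
        refine mul_le_mul_of_nonneg_right ?_ (norm_nonneg _)
        exact (Finset.sum_le_sum fun j _ => h j k).trans (colsum_le N k)
    _ = l1OpNorm' N * ‖x‖ := by rw [l1_norm_eq, Finset.mul_sum]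

lemma l1OpNorm'_nonneg {n : ℕ} (A : Matrix (Fin n) (Fin n) ℂ) : 0 ≤ l1OpNorm' A :=
  ContinuousLinearMap.opNorm_nonneg _


lemma l1OpNorm_def {n : ℕ} (A : Matrix (Fin n) (Fin n) ℂ) :
    l1OpNorm A = l1OpNorm' A := rfl

/-- There is a universal (dimension-independent) constant `C` such that for all `n`, all
diagonalizable `n×n` complex matrices `A = U⁻¹ diag(λ) U` and `B = V⁻¹ diag(μ) V` with real
eigenvalues, and `|A| = U⁻¹ diag(|λ|) U`, `|B| = V⁻¹ diag(|μ|) V`, one has, in the operator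
norm of `L(ℓ_1^n)`,
`‖|B| − |A|‖ ≤ C ‖U‖‖U⁻¹‖‖V‖‖V⁻¹‖ ‖B − A‖`. -/
theorem stmt_19 :
    ∃ C : ℝ, 0 < C ∧
      ∀ (n : ℕ) (U U' V V' : Matrix (Fin n) (Fin n) ℂ) (lam mu : Fin n → ℝ),
        U * U' = 1 → U' * U = 1 → V * V' = 1 → V' * V = 1 →
        l1OpNorm
            (V' * Matrix.diagonal (fun k => ((|mu k| : ℝ) : ℂ)) * V -
              U' * Matrix.diagonal (fun j => ((|lam j| : ℝ) : ℂ)) * U) ≤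
          C * l1OpNorm U * l1OpNorm U' * l1OpNorm V * l1OpNorm V' *
            l1OpNorm
              (V' * Matrix.diagonal (fun k => (mu k : ℂ)) * V -
                U' * Matrix.diagonal (fun j => (lam j : ℂ)) * U) := by
  simp only [l1OpNorm_def]
  refine ⟨1, one_pos, fun n U U' V V' lam mu hUU' hU'U hVV' hV'V => ?_⟩
  set P := U * V' with hP
  set MA := V' * Matrix.diagonal (fun k => ((|mu k| : ℝ) : ℂ)) * V -
      U' * Matrix.diagonal (fun j => ((|lam j| : ℝ) : ℂ)) * U with hMA
  set NA := V' * Matrix.diagonal (fun k => (mu k : ℂ)) * V -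
      U' * Matrix.diagonal (fun j => (lam j : ℂ)) * U with hNA
  have hM : U * MA * V' = P * Matrix.diagonal (fun k => ((|mu k| : ℝ) : ℂ)) -
      Matrix.diagonal (fun j => ((|lam j| : ℝ) : ℂ)) * P := by
    rw [hMA, hP]
    rw [Matrix.mul_sub, Matrix.sub_mul]
    congr 1
    · calc U * (V' * Matrix.diagonal (fun k => ((|mu k| : ℝ) : ℂ)) * V) * V'
          = U * V' * Matrix.diagonal (fun k => ((|mu k| : ℝ) : ℂ)) * (V * V') := by
            noncomm_ring
        _ = _ := by rw [hVV', Matrix.mul_one]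
    · calc U * (U' * Matrix.diagonal (fun j => ((|lam j| : ℝ) : ℂ)) * U) * V'
          = (U * U') * (Matrix.diagonal (fun j => ((|lam j| : ℝ) : ℂ)) * (U * V')) := by
            noncomm_ring
        _ = _ := by rw [hUU', Matrix.one_mul]
  have hN : U * NA * V' = P * Matrix.diagonal (fun k => ((mu k : ℝ) : ℂ)) -
      Matrix.diagonal (fun j => ((lam j : ℝ) : ℂ)) * P := by
    rw [hNA, hP]
    rw [Matrix.mul_sub, Matrix.sub_mul]
    congr 1
    · calc U * (V' * Matrix.diagonal (fun k => ((mu k : ℝ) : ℂ)) * V) * V'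
          = U * V' * Matrix.diagonal (fun k => ((mu k : ℝ) : ℂ)) * (V * V') := by
            noncomm_ring
        _ = _ := by rw [hVV', Matrix.mul_one]
    · calc U * (U' * Matrix.diagonal (fun j => ((lam j : ℝ) : ℂ)) * U) * V'
          = (U * U') * (Matrix.diagonal (fun j => ((lam j : ℝ) : ℂ)) * (U * V')) := by
            noncomm_ring
        _ = _ := by rw [hUU', Matrix.one_mul]
  have hmono : l1OpNorm' (U * MA * V') ≤ l1OpNorm' (U * NA * V') := by
    apply l1OpNorm'_mono
    intro j k
    rw [hM, hN]
    simp only [Matrix.sub_apply, Matrix.mul_diagonal, Matrix.diagonal_mul]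
    rw [show P j k * ((|mu k| : ℝ) : ℂ) - ((|lam j| : ℝ) : ℂ) * P j k
        = P j k * (((|mu k| : ℝ) : ℂ) - ((|lam j| : ℝ) : ℂ)) by ring,
      show P j k * ((mu k : ℝ) : ℂ) - ((lam j : ℝ) : ℂ) * P j k
        = P j k * (((mu k : ℝ) : ℂ) - ((lam j : ℝ) : ℂ)) by ring,
      norm_mul, norm_mul]
    refine mul_le_mul_of_nonneg_left ?_ (norm_nonneg _)
    rw [← Complex.ofReal_sub, ← Complex.ofReal_sub, Complex.norm_real, Complex.norm_real]
    exact (abs_abs_sub_abs_le_abs_sub _ _)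
  have hMA' : MA = U' * (U * MA * V') * V := by
    calc MA = (U' * U) * MA * (V' * V) := by rw [hU'U, hV'V, Matrix.one_mul, Matrix.mul_one]
      _ = U' * (U * MA * V') * V := by noncomm_ring
  calc l1OpNorm' MA = l1OpNorm' (U' * (U * MA * V') * V) := by rw [← hMA']
    _ ≤ l1OpNorm' (U' * (U * MA * V')) * l1OpNorm' V := l1OpNorm'_mul_le _ _
    _ ≤ (l1OpNorm' U' * l1OpNorm' (U * MA * V')) * l1OpNorm' V := by
        exact mul_le_mul_of_nonneg_right (l1OpNorm'_mul_le _ _) (l1OpNorm'_nonneg _)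
    _ ≤ (l1OpNorm' U' * l1OpNorm' (U * NA * V')) * l1OpNorm' V := by
        refine mul_le_mul_of_nonneg_right
          (mul_le_mul_of_nonneg_left hmono (l1OpNorm'_nonneg _)) (l1OpNorm'_nonneg _)
    _ ≤ (l1OpNorm' U' * (l1OpNorm' (U * NA) * l1OpNorm' V')) * l1OpNorm' V := by
        refine mul_le_mul_of_nonneg_right
          (mul_le_mul_of_nonneg_left (l1OpNorm'_mul_le _ _) (l1OpNorm'_nonneg _))
          (l1OpNorm'_nonneg _)
    _ ≤ (l1OpNorm' U' * ((l1OpNorm' U * l1OpNorm' NA) * l1OpNorm' V')) * l1OpNorm' V := by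
        refine mul_le_mul_of_nonneg_right (mul_le_mul_of_nonneg_left
          (mul_le_mul_of_nonneg_right (l1OpNorm'_mul_le _ _) (l1OpNorm'_nonneg _))
          (l1OpNorm'_nonneg _)) (l1OpNorm'_nonneg _)
    _ = 1 * l1OpNorm' U * l1OpNorm' U' * l1OpNorm' V * l1OpNorm' V' * l1OpNorm' NA := by ring
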